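/- For every k ≥ 1 and all h₁, h₂ ∈ Γ_{(k)}, one has [h₁h₂, x, (p^k−p^{k−1})…, x] ≡ [h₁, x, (p^k−p^{k−1})…, x] · [h₂, x, (p^k−p^{k−1})…, x] modulo L̃_k, i.e. ([h₁,x,(p^k−p^{k−1})…,x]·[h₂,x,(p^k−p^{k−1})…,x])^{−1}·[h₁h₂,x,(p^k−p^{k−1})…,x] ∈ L̃_k. (Lemma 5.5(i) of the paper, with the lower-central term γ_{p^{k−1}}(𝔊(p)) described via its generators.) -/

import Mathlib

namespace Paper

variable {G : Type*} [Group G]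

/-- The paper's commutator `[a,b] = a⁻¹ b⁻¹ a b`. -/
def pc {G : Type*} [Group G] (a b : G) : G := a⁻¹ * b⁻¹ * a * b

/-- The left-normed iterated commutator `[a, x, (r)…, x]`. -/
def itc {G : Type*} [Group G] (x a : G) : ℕ → G
  | 0 => a
  | r + 1 => pc (itc x a r) x

/-- `c_i`, where `c_1 = y` and `c_{i+1} = [c_i, x]`; equivalently `c_i = [y, x, (i-1)…, x]`. -/
def cc (x y : G) (i : ℕ) : G := itc x y (i - 1)

/-- `z_{m,n} = [c_m, c_n]`. -/
def zz (x y : G) (m n : ℕ) : G := pc (cc x y m) (cc x y n)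

/-- `H = ⟨c_i : i ≥ 1⟩`. -/
def Hsub (x y : G) : Subgroup G :=
  Subgroup.closure {g | ∃ i, 1 ≤ i ∧ g = cc x y i}

/-- `Z = ⟨z_{m,n} : m, n ≥ 1⟩` (odd-prime case). -/
def ZsubP (x y : G) : Subgroup G :=
  Subgroup.closure {g | ∃ m n, 1 ≤ m ∧ 1 ≤ n ∧ g = zz x y m n}

/-- `w_{i,j,k} = ∏_{t=1}^{p^k−1} [z_{i+t,j+t−1}, x, (p^k−1−t)…, x]`,
factors in order of increasing `t` (reindexed by `t ↦ t+1`). -/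
def wwP (p : ℕ) (x y : G) (i j k : ℕ) : G :=
  ((List.range (p ^ k - 1)).map
    (fun t => itc x (zz x y (i + t + 1) (j + t)) (p ^ k - 2 - t))).prod

/-- `d_k(h) = [h,x,(p^k−1)…,x]⁻¹ · x^{−p^k} · (xh)^{p^k}`. -/
def ddP (p : ℕ) (x y : G) (k : ℕ) (h : G) : G :=
  (itc x h (p ^ k - 1))⁻¹ * (x ^ p ^ k)⁻¹ * (x * h) ^ p ^ k

/-- `L_k`, the normal closure of `{w_{i,j,k} : i,j ≥ 1} ∪ {d_k(y)} ∪ {z_{m,n} : m ≥ p^k, n ≥ 1}`. -/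
def LsubP (p : ℕ) (x y : G) (k : ℕ) : Subgroup G :=
  Subgroup.normalClosure (({g | ∃ i j, 1 ≤ i ∧ 1 ≤ j ∧ g = wwP p x y i j k} ∪
      {ddP p x y k y}) ∪
    {g | ∃ m n, p ^ k ≤ m ∧ 1 ≤ n ∧ g = zz x y m n})

/-- `Γ^{p^k} = ⟨g^{p^k} : g ∈ Γ⟩`. -/
def powSubP (G : Type*) [Group G] (p k : ℕ) : Subgroup G :=
  Subgroup.closure {g | ∃ a : G, g = a ^ p ^ k}

/-- `Θ̃_k = ⟨z_{m,n} : m ≥ p^k, n ≥ 1⟩`. -/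
def ThetaT (p : ℕ) (x y : G) (k : ℕ) : Subgroup G :=
  Subgroup.closure {g | ∃ m n, p ^ k ≤ m ∧ 1 ≤ n ∧ g = zz x y m n}

/-- `[A, g] = ⟨[a,g] : a ∈ A⟩`. -/
def commSub (A : Subgroup G) (g : G) : Subgroup G :=
  Subgroup.closure {c | ∃ a ∈ A, c = pc a g}

/-- The `r`-fold iterate `[A, g, (r)…, g]`. -/
def itcSub (A : Subgroup G) (g : G) : ℕ → Subgroup G
  | 0 => A
  | r + 1 => commSub (itcSub A g r) g

/-- `Λ̃_k`. -/
def LambdaT (p : ℕ) (x y : G) (k : ℕ) : Subgroup G :=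
  Subgroup.closure {g | ∃ m n, g = itc (x ^ p ^ (k - 1)) (zz x y m n) (p - 1) ∧
    ((p ^ (k - 1) ≤ m ∧ m < p ^ k ∧
        max 1 (m - m / p ^ (k - 1) * p ^ (k - 1)) ≤ n ∧ n < p ^ (k - 1)) ∨
      (∃ i, 2 ≤ i ∧ i ≤ p - 2 ∧ m = i * p ^ (k - 1) ∧ n = p ^ (k - 1)))}

/-- `w̃_{i,j,k} = ∏_{t=1}^{p^k−p^{k−1}} [z_{i+t,j+t−1}, x, (p^k−p^{k−1}−t)…, x]`,
factors in order of increasing `t` (reindexed by `t ↦ t+1`). -/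
def wwT (p : ℕ) (x y : G) (i j k : ℕ) : G :=
  ((List.range (p ^ k - p ^ (k - 1))).map
    (fun t => itc x (zz x y (i + t + 1) (j + t)) (p ^ k - p ^ (k - 1) - 1 - t))).prod

/-- `d̃_k(h) = [h,x,(p^k−p^{k−1})…,x]⁻¹ · x^{−p^k} · (x^{p^{k−1}}h)^p`. -/
def ddT (p : ℕ) (x y : G) (k : ℕ) (h : G) : G :=
  (itc x h (p ^ k - p ^ (k - 1)))⁻¹ * (x ^ p ^ k)⁻¹ * (x ^ p ^ (k - 1) * h) ^ p

/-- `L̃_k`, the normal closure of `{w̃_{i,j,k} : i,j ≥ p^{k−1}} ∪ {d̃_k(y)}`. -/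
def LsubT (p : ℕ) (x y : G) (k : ℕ) : Subgroup G :=
  Subgroup.normalClosure
    ({g | ∃ i j, p ^ (k - 1) ≤ i ∧ p ^ (k - 1) ≤ j ∧ g = wwT p x y i j k} ∪
      {ddT p x y k y})

/-- `Γ_{(k)} = ⟨c_j (j ≥ p^{k−1}), z_{m,n} (m > n ≥ 1, m + n ≥ p^{k−1})⟩`. -/
def GammaK (p : ℕ) (x y : G) (k : ℕ) : Subgroup G :=
  Subgroup.closure ({g | ∃ j, p ^ (k - 1) ≤ j ∧ g = cc x y j} ∪
    {g | ∃ m n, 1 ≤ n ∧ n < m ∧ p ^ (k - 1) ≤ m + n ∧ g = zz x y m n})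

set_option linter.unusedSectionVars false

-- pure identities
lemma pc_one_left (g : G) : pc (1 : G) g = 1 := by simp [pc]
lemma pc_one_right (a : G) : pc a (1 : G) = 1 := by simp [pc]
lemma pc_mul_fst (a b g : G) : pc (a*b) g = (b⁻¹ * pc a g * b) * pc b g := by
  simp only [pc]; group
lemma pc_inv_fst (a g : G) : pc a⁻¹ g = (a⁻¹)⁻¹ * (pc a g)⁻¹ * a⁻¹ := by
  simp only [pc]; group
lemma pc_mul_snd (a u v : G) : pc a (u*v) = pc a v * (v⁻¹ * pc a u * v) := by
  simp only [pc]; group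
lemma pc_inv_snd (a u : G) : pc a u⁻¹ = (u⁻¹)⁻¹ * (pc a u)⁻¹ * u⁻¹ := by
  simp only [pc]; group
lemma conj_pc (a b g : G) : g⁻¹ * pc a b * g = pc (g⁻¹*a*g) (g⁻¹*b*g) := by
  simp only [pc]; group
lemma pc_eq_self (w v : G) : v⁻¹ * w * v = w * pc w v := by simp only [pc]; group
lemma conjX_eq (a x : G) : x⁻¹ * a * x = a * pc a x := by simp only [pc]; group
lemma pcX_eq (a x : G) : pc a x = a⁻¹ * (x⁻¹ * a * x) := by simp only [pc]; group
lemma conj_eq_self {d h : G} (hc : d * h = h * d) : h⁻¹ * d * h = d := by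
  rw [mul_assoc, hc]; group
lemma pc_eq_one {a b : G} (hc : a * b = b * a) : pc a b = 1 := by
  simp only [pc]; rw [mul_assoc _ a b, hc]; group

section Core
variable {Q : Type*} [Group Q]

/-- abstract `H` -/
def HQ (C : ℕ → Q) : Subgroup Q := Subgroup.closure {g : Q | ∃ i, 1 ≤ i ∧ g = C i}

/-- abstract `K = H ⊓ C(H)` -/
def KQ (C : ℕ → Q) : Subgroup Q := HQ C ⊓ Subgroup.centralizer (HQ C : Set Q)

/-- abstract derived subgroup of `H` -/
def DQ (C : ℕ → Q) : Subgroup Q :=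
  Subgroup.closure {g : Q | ∃ a ∈ HQ C, ∃ b ∈ HQ C, g = pc a b}

variable {X : Q} {C : ℕ → Q}

lemma C_mem_HQ (i : ℕ) (hi : 1 ≤ i) : C i ∈ HQ C :=
  Subgroup.subset_closure ⟨i, hi, rfl⟩

lemma pc_mem_HQ {a b : Q} (ha : a ∈ HQ C) (hb : b ∈ HQ C) : pc a b ∈ HQ C := by
  simp only [pc]
  exact mul_mem (mul_mem (mul_mem (inv_mem ha) (inv_mem hb)) ha) hb

lemma KQ_le_HQ : KQ C ≤ HQ C := inf_le_left

lemma comm_KH {d h : Q} (hd : d ∈ KQ C) (hh : h ∈ HQ C) : d * h = h * d :=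
  (Subgroup.mem_centralizer_iff.1 hd.2 h hh).symm

lemma pc_of_K_fst {d h : Q} (hd : d ∈ KQ C) (hh : h ∈ HQ C) : pc d h = 1 :=
  pc_eq_one (comm_KH hd hh)

lemma pc_of_K_snd {h d : Q} (hh : h ∈ HQ C) (hd : d ∈ KQ C) : pc h d = 1 :=
  pc_eq_one (comm_KH hd hh).symm

lemma conj_K_by_H {d h : Q} (hd : d ∈ KQ C) (hh : h ∈ HQ C) : h⁻¹ * d * h = d :=
  conj_eq_self (comm_KH hd hh)

lemma conj_H_by_K {h d : Q} (hh : h ∈ HQ C) (hd : d ∈ KQ C) : d⁻¹ * h * d = h :=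
  conj_eq_self (comm_KH hd hh).symm

section WithHx
variable (hx : ∀ i, 1 ≤ i → C (i+1) = pc (C i) X)
include hx

lemma pcX_mem_HQ : ∀ a ∈ HQ C, pc a X ∈ HQ C := by
  intro a ha
  induction ha using Subgroup.closure_induction with
  | mem g hg => obtain ⟨i, hi, rfl⟩ := hg; rw [← hx i hi]; exact C_mem_HQ (i+1) (by omega)
  | one => rw [pc_one_left]; exact one_mem _
  | mul a b ha hb iha ihb =>
      rw [pc_mul_fst]
      exact mul_mem (mul_mem (mul_mem (inv_mem hb) iha) hb) ihb
  | inv a ha iha =>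
      rw [pc_inv_fst]
      exact mul_mem (mul_mem (inv_mem (inv_mem ha)) (inv_mem iha)) (inv_mem ha)

lemma conjX_mem_HQ {a : Q} (ha : a ∈ HQ C) : X⁻¹ * a * X ∈ HQ C := by
  rw [conjX_eq]; exact mul_mem ha (pcX_mem_HQ hx a ha)

lemma itc_mem_HQ {a : Q} (ha : a ∈ HQ C) (n : ℕ) : itc X a n ∈ HQ C := by
  induction n with
  | zero => exact ha
  | succ n ih => exact pcX_mem_HQ hx _ ih

lemma itc_C (i : ℕ) (hi : 1 ≤ i) (n : ℕ) : itc X (C i) n = C (i + n) := by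
  induction n with
  | zero => rfl
  | succ n ih =>
      show pc (itc X (C i) n) X = C (i + (n+1))
      rw [ih, ← hx (i+n) (by omega), Nat.add_assoc]

end WithHx

section WithBoth
variable (hx : ∀ i, 1 ≤ i → C (i+1) = pc (C i) X)
variable (hzH : ∀ m n : ℕ, 1 ≤ m → 1 ≤ n →
    ∀ h ∈ HQ C, pc (C m) (C n) * h = h * pc (C m) (C n))
include hzH

lemma pc_mem_KQ : ∀ a ∈ HQ C, ∀ b ∈ HQ C, pc a b ∈ KQ C := by
  intro a ha
  induction ha using Subgroup.closure_induction with
  | mem g hg =>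
      obtain ⟨m, hm, rfl⟩ := hg
      intro b hb
      induction hb using Subgroup.closure_induction with
      | mem g' hg' =>
          obtain ⟨n, hn, rfl⟩ := hg'
          refine Subgroup.mem_inf.2 ⟨pc_mem_HQ (C_mem_HQ m hm) (C_mem_HQ n hn), ?_⟩
          rw [Subgroup.mem_centralizer_iff]
          intro h hh
          exact (hzH m n hm hn h hh).symm
      | one => rw [pc_one_right]; exact one_mem _
      | mul b c hb hc ihb ihc =>
          rw [pc_mul_snd, conj_K_by_H ihb hc]
          exact mul_mem ihc ihb
      | inv b hb ihb =>
          rw [pc_inv_snd, conj_K_by_H (inv_mem ihb) (inv_mem hb)]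
          exact inv_mem ihb
  | one => intro b hb; rw [pc_one_left]; exact one_mem _
  | mul a c ha hc iha ihc =>
      intro b hb
      rw [pc_mul_fst, conj_K_by_H (iha b hb) hc]
      exact mul_mem (iha b hb) (ihc b hb)
  | inv a ha iha =>
      intro b hb
      rw [pc_inv_fst, conj_K_by_H (inv_mem (iha b hb)) (inv_mem ha)]
      exact inv_mem (iha b hb)

end WithBoth
end Core

section DLayer
variable {Q : Type*} [Group Q] {X : Q} {C : ℕ → Q}
variable (hx : ∀ i, 1 ≤ i → C (i+1) = pc (C i) X)
variable (hzH : ∀ m n : ℕ, 1 ≤ m → 1 ≤ n →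
    ∀ h ∈ HQ C, pc (C m) (C n) * h = h * pc (C m) (C n))

lemma pc_mem_DQ {a b : Q} (ha : a ∈ HQ C) (hb : b ∈ HQ C) : pc a b ∈ DQ C :=
  Subgroup.subset_closure ⟨a, ha, b, hb, rfl⟩

include hzH in
lemma DQ_le_KQ : DQ C ≤ KQ C := by
  rw [DQ, Subgroup.closure_le]
  rintro g ⟨a, ha, b, hb, rfl⟩
  exact pc_mem_KQ hzH a ha b hb

lemma DQ_le_HQ' (h : DQ C ≤ KQ C) : DQ C ≤ HQ C := le_trans h KQ_le_HQ

include hx in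
lemma conjX_mem_DQ : ∀ d ∈ DQ C, X⁻¹ * d * X ∈ DQ C := by
  intro d hd
  induction hd using Subgroup.closure_induction with
  | mem g hg =>
      obtain ⟨a, ha, b, hb, rfl⟩ := hg
      rw [conj_pc]
      exact pc_mem_DQ (conjX_mem_HQ hx ha) (conjX_mem_HQ hx hb)
  | one => simpa using one_mem _
  | mul a b ha hb iha ihb =>
      have : X⁻¹ * (a * b) * X = (X⁻¹ * a * X) * (X⁻¹ * b * X) := by group
      rw [this]; exact mul_mem iha ihb
  | inv a ha iha =>
      have : X⁻¹ * a⁻¹ * X = (X⁻¹ * a * X)⁻¹ := by group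
      rw [this]; exact inv_mem iha

lemma itc_one (X : Q) (n : ℕ) : itc X (1:Q) n = 1 := by
  induction n with
  | zero => rfl
  | succ n ih => show pc (itc X (1:Q) n) X = 1; rw [ih, pc_one_left]

include hx in
lemma pcX_mem_DQ {d : Q} (hd : d ∈ DQ C) : pc d X ∈ DQ C := by
  have h : pc d X = d⁻¹ * (X⁻¹ * d * X) := pcX_eq d X
  rw [h]
  exact mul_mem (inv_mem hd) (conjX_mem_DQ hx d hd)

include hx in
lemma itc_mem_DQ {d : Q} (hd : d ∈ DQ C) (n : ℕ) : itc X d n ∈ DQ C := by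
  induction n with
  | zero => exact hd
  | succ n ih => exact pcX_mem_DQ hx ih

include hx hzH in
/-- φ(a h) = φ a * φ h * central correction; membership versions -/
lemma pcX_mul_H_H {u v : Q} (hu : u ∈ HQ C) (hv : v ∈ HQ C) :
    pc (u*v) X = pc u X * pc v X * pc (pc u X) v := by
  rw [pc_mul_fst, pc_eq_self]
  have hcm : pc (pc u X) v * pc v X = pc v X * pc (pc u X) v :=
    comm_KH (pc_mem_KQ hzH _ (pcX_mem_HQ hx u hu) _ hv) (pcX_mem_HQ hx v hv)
  rw [mul_assoc, hcm, ← mul_assoc]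

include hx hzH in
lemma pcX_mul_H_D {u d : Q} (hu : u ∈ HQ C) (hd : d ∈ DQ C) :
    pc (u*d) X = pc u X * pc d X := by
  rw [pcX_mul_H_H hx hzH hu (DQ_le_HQ' (DQ_le_KQ hzH) hd),
    pc_of_K_snd (pcX_mem_HQ hx u hu) (DQ_le_KQ hzH hd), mul_one]

include hx hzH in
lemma pcX_inv_D {d : Q} (hd : d ∈ DQ C) : pc d⁻¹ X = (pc d X)⁻¹ := by
  rw [pc_inv_fst, inv_inv]
  have hco : Commute (pc d X) d :=
    comm_KH (DQ_le_KQ hzH (pcX_mem_DQ hx hd)) (DQ_le_HQ' (DQ_le_KQ hzH) hd)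
  have h2 := conj_eq_self (hco.inv_left.inv_right.eq)
  rw [inv_inv] at h2
  exact h2

include hx hzH in
lemma pcX_list_prod {l : List Q} (hl : ∀ u ∈ l, u ∈ DQ C) :
    pc l.prod X = (l.map (fun u => pc u X)).prod := by
  induction l with
  | nil => simpa using pc_one_left X
  | cons a l ih =>
      have ha : a ∈ DQ C := hl a List.mem_cons_self
      have hl' : ∀ u ∈ l, u ∈ DQ C := fun u hu => hl u (List.mem_cons_of_mem a hu)
      rw [List.prod_cons, pcX_mul_H_D hx hzH (DQ_le_HQ' (DQ_le_KQ hzH) ha)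
        (Subgroup.list_prod_mem _ hl'), List.map_cons, List.prod_cons, ih hl']

include hx hzH in
/-- the quadratic deviation lemma for iterates -/
lemma quad {a b : Q} (ha : a ∈ HQ C) (hb : b ∈ HQ C) (n : ℕ) :
    ∃ d ∈ DQ C, itc X (a*b) n = itc X a n * itc X b n * d := by
  induction n with
  | zero => exact ⟨1, one_mem _, (mul_one _).symm⟩
  | succ n ih =>
      obtain ⟨d, hd, he⟩ := ih
      have hu : itc X a n ∈ HQ C := itc_mem_HQ hx ha n
      have hv : itc X b n ∈ HQ C := itc_mem_HQ hx hb n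
      refine ⟨pc (pc (itc X a n) X) (itc X b n) * pc d X,
        mul_mem (pc_mem_DQ (pcX_mem_HQ hx _ hu) hv) (pcX_mem_DQ hx hd), ?_⟩
      show pc (itc X (a*b) n) X = _
      rw [he, pcX_mul_H_D hx hzH (mul_mem hu hv) hd, pcX_mul_H_H hx hzH hu hv]
      show _ = itc X a n.succ * itc X b n.succ * _
      have : itc X a n.succ = pc (itc X a n) X := rfl
      rw [this]
      have : itc X b n.succ = pc (itc X b n) X := rfl
      rw [this]
      group

include hx hzH in
lemma itc_inv {a : Q} (ha : a ∈ HQ C) (n : ℕ) :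
    ∃ d ∈ DQ C, itc X a⁻¹ n = (itc X a n)⁻¹ * d := by
  obtain ⟨d, hd, he⟩ := quad hx hzH ha (inv_mem ha) n
  rw [mul_inv_cancel, itc_one] at he
  refine ⟨d⁻¹, inv_mem hd, ?_⟩
  have h2 : itc X a n * (itc X a⁻¹ n * d) = 1 := by rw [← mul_assoc]; exact he.symm
  have h3 : itc X a⁻¹ n * d = (itc X a n)⁻¹ := eq_inv_of_mul_eq_one_right h2
  rw [← h3, mul_inv_cancel_right]

include hx hzH in
lemma pc_fst_mulHH {u₁ u₂ w : Q} (h₁ : u₁ ∈ HQ C) (h₂ : u₂ ∈ HQ C) (hw : w ∈ HQ C) :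
    pc (u₁*u₂) w = pc u₁ w * pc u₂ w := by
  rw [pc_mul_fst, conj_K_by_H (pc_mem_KQ hzH _ h₁ _ hw) h₂]

include hx hzH in
lemma pc_fst_mulD {u d w : Q} (hu : u ∈ HQ C) (hd : d ∈ DQ C) (hw : w ∈ HQ C) :
    pc (u*d) w = pc u w := by
  rw [pc_fst_mulHH hx hzH hu (DQ_le_HQ' (DQ_le_KQ hzH) hd) hw,
    pc_of_K_fst (DQ_le_KQ hzH hd) hw, mul_one]

include hx hzH in
lemma pc_fst_inv {u w : Q} (hu : u ∈ HQ C) (hw : w ∈ HQ C) :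
    pc u⁻¹ w = (pc u w)⁻¹ := by
  rw [pc_inv_fst, inv_inv]
  have hco : Commute (pc u w) u := comm_KH (pc_mem_KQ hzH _ hu _ hw) hu
  have h2 := conj_eq_self (hco.inv_left.inv_right.eq)
  rw [inv_inv] at h2
  exact h2

include hx hzH in
lemma pc_snd_mulHH {u w₁ w₂ : Q} (hu : u ∈ HQ C) (h₁ : w₁ ∈ HQ C) (h₂ : w₂ ∈ HQ C) :
    pc u (w₁*w₂) = pc u w₁ * pc u w₂ := by
  rw [pc_mul_snd, conj_K_by_H (pc_mem_KQ hzH _ hu _ h₁) h₂]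
  exact comm_KH (pc_mem_KQ hzH _ hu _ h₂) (pc_mem_HQ hu h₁)

include hx hzH in
lemma pc_snd_mulD {u w d : Q} (hu : u ∈ HQ C) (hw : w ∈ HQ C) (hd : d ∈ DQ C) :
    pc u (w*d) = pc u w := by
  rw [pc_snd_mulHH hx hzH hu hw (DQ_le_HQ' (DQ_le_KQ hzH) hd),
    pc_of_K_snd hu (DQ_le_KQ hzH hd), mul_one]

include hx hzH in
lemma pc_snd_inv {u w : Q} (hu : u ∈ HQ C) (hw : w ∈ HQ C) :
    pc u w⁻¹ = (pc u w)⁻¹ := by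
  rw [pc_inv_snd, inv_inv]
  have hco : Commute (pc u w) w := comm_KH (pc_mem_KQ hzH _ hu _ hw) hw
  have h2 := conj_eq_self (hco.inv_left.inv_right.eq)
  rw [inv_inv] at h2
  exact h2

end DLayer

/-- the deviation sequence `E_n` for `φ^n(ab) = φ^n(a) φ^n(b) E_n` -/
def TT {Q : Type*} [Group Q] (X a b : Q) : ℕ → Q
  | 0 => 1
  | n + 1 => pc (TT X a b n) X * pc (itc X a (n+1)) (itc X b n)

section TLayer
variable {Q : Type*} [Group Q] {X : Q} {C : ℕ → Q}
variable (hx : ∀ i, 1 ≤ i → C (i+1) = pc (C i) X)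
variable (hzH : ∀ m n : ℕ, 1 ≤ m → 1 ≤ n →
    ∀ h ∈ HQ C, pc (C m) (C n) * h = h * pc (C m) (C n))
include hx hzH

lemma TT_mem_DQ {a b : Q} (ha : a ∈ HQ C) (hb : b ∈ HQ C) (n : ℕ) :
    TT X a b n ∈ DQ C := by
  induction n with
  | zero => exact one_mem _
  | succ n ih =>
      exact mul_mem (pcX_mem_DQ hx ih)
        (pc_mem_DQ (itc_mem_HQ hx ha (n+1)) (itc_mem_HQ hx hb n))

lemma main1 {a b : Q} (ha : a ∈ HQ C) (hb : b ∈ HQ C) (n : ℕ) :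
    itc X (a*b) n = itc X a n * itc X b n * TT X a b n := by
  induction n with
  | zero => exact (mul_one _).symm
  | succ n ih =>
      have hu : itc X a n ∈ HQ C := itc_mem_HQ hx ha n
      have hv : itc X b n ∈ HQ C := itc_mem_HQ hx hb n
      have hT : TT X a b n ∈ DQ C := TT_mem_DQ hx hzH ha hb n
      show pc (itc X (a*b) n) X = _
      rw [ih, pcX_mul_H_D hx hzH (mul_mem hu hv) hT, pcX_mul_H_H hx hzH hu hv]
      show _ = itc X a (n+1) * itc X b (n+1) * TT X a b (n+1)
      show _ = itc X a (n+1) * itc X b (n+1) *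
        (pc (TT X a b n) X * pc (itc X a (n+1)) (itc X b n))
      have h1 : itc X a (n+1) = pc (itc X a n) X := rfl
      have h2 : itc X b (n+1) = pc (itc X b n) X := rfl
      rw [h1, h2]
      have hcm : pc (pc (itc X a n) X) (itc X b n) * pc (TT X a b n) X
          = pc (TT X a b n) X * pc (pc (itc X a n) X) (itc X b n) :=
        comm_KH (DQ_le_KQ hzH (pc_mem_DQ (pcX_mem_HQ hx _ hu) hv))
          (DQ_le_HQ' (DQ_le_KQ hzH) (pcX_mem_DQ hx hT))
      rw [mul_assoc (pc (itc X a n) X * pc (itc X b n) X), hcm,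
        ← mul_assoc]

lemma TT_left_D {a b : Q} (ha : a ∈ DQ C) (hb : b ∈ HQ C) (n : ℕ) :
    TT X a b n = 1 := by
  induction n with
  | zero => rfl
  | succ n ih =>
      show pc (TT X a b n) X * pc (itc X a (n+1)) (itc X b n) = 1
      rw [ih, pc_one_left,
        pc_of_K_fst (DQ_le_KQ hzH (itc_mem_DQ hx ha (n+1))) (itc_mem_HQ hx hb n),
        mul_one]

lemma TT_right_D {a b : Q} (ha : a ∈ HQ C) (hb : b ∈ DQ C) (n : ℕ) :
    TT X a b n = 1 := by
  induction n with
  | zero => rfl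
  | succ n ih =>
      show pc (TT X a b n) X * pc (itc X a (n+1)) (itc X b n) = 1
      rw [ih, pc_one_left,
        pc_of_K_snd (itc_mem_HQ hx ha (n+1)) (DQ_le_KQ hzH (itc_mem_DQ hx hb n)),
        mul_one]

lemma TT_mul_left {a₁ a₂ b : Q} (h₁ : a₁ ∈ HQ C) (h₂ : a₂ ∈ HQ C) (hb : b ∈ HQ C)
    (n : ℕ) : TT X (a₁*a₂) b n = TT X a₁ b n * TT X a₂ b n := by
  induction n with
  | zero => exact (one_mul 1).symm
  | succ n ih =>
      obtain ⟨d, hd, he⟩ := quad hx hzH h₁ h₂ (n+1)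
      show pc (TT X (a₁*a₂) b n) X * pc (itc X (a₁*a₂) (n+1)) (itc X b n) = _
      have hv : itc X b n ∈ HQ C := itc_mem_HQ hx hb n
      have hu₁ : itc X a₁ (n+1) ∈ HQ C := itc_mem_HQ hx h₁ (n+1)
      have hu₂ : itc X a₂ (n+1) ∈ HQ C := itc_mem_HQ hx h₂ (n+1)
      rw [ih, he, pc_fst_mulD hx hzH (mul_mem hu₁ hu₂) hd hv,
        pc_fst_mulHH hx hzH hu₁ hu₂ hv,
        pcX_mul_H_D hx hzH (DQ_le_HQ' (DQ_le_KQ hzH) (TT_mem_DQ hx hzH h₁ hb n))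
          (TT_mem_DQ hx hzH h₂ hb n)]
      show _ = pc (TT X a₁ b n) X * pc (itc X a₁ (n+1)) (itc X b n) *
        (pc (TT X a₂ b n) X * pc (itc X a₂ (n+1)) (itc X b n))
      have hcm : pc (TT X a₂ b n) X * pc (itc X a₁ (n+1)) (itc X b n)
          = pc (itc X a₁ (n+1)) (itc X b n) * pc (TT X a₂ b n) X :=
        comm_KH (DQ_le_KQ hzH (pcX_mem_DQ hx (TT_mem_DQ hx hzH h₂ hb n)))
          (pc_mem_HQ hu₁ hv)
      set A := pc (TT X a₁ b n) X
      set B := pc (TT X a₂ b n) X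
      set Z₁ := pc (itc X a₁ (n+1)) (itc X b n)
      set Z₂ := pc (itc X a₂ (n+1)) (itc X b n)
      calc A * B * (Z₁ * Z₂) = A * (B * Z₁) * Z₂ := by group
        _ = A * (Z₁ * B) * Z₂ := by rw [hcm]
        _ = A * Z₁ * (B * Z₂) := by group

lemma TT_inv_left {a b : Q} (ha : a ∈ HQ C) (hb : b ∈ HQ C) (n : ℕ) :
    TT X a⁻¹ b n = (TT X a b n)⁻¹ := by
  induction n with
  | zero => exact inv_one.symm
  | succ n ih =>
      obtain ⟨d, hd, he⟩ := itc_inv hx hzH ha (n+1)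
      show pc (TT X a⁻¹ b n) X * pc (itc X a⁻¹ (n+1)) (itc X b n) = _
      have hv : itc X b n ∈ HQ C := itc_mem_HQ hx hb n
      have hu : itc X a (n+1) ∈ HQ C := itc_mem_HQ hx ha (n+1)
      rw [ih, he, pc_fst_mulD hx hzH (inv_mem hu) hd hv, pc_fst_inv hx hzH hu hv,
        pcX_inv_D hx hzH (TT_mem_DQ hx hzH ha hb n)]
      show _ = (pc (TT X a b n) X * pc (itc X a (n+1)) (itc X b n))⁻¹
      have hco : Commute (pc (TT X a b n) X) (pc (itc X a (n+1)) (itc X b n)) :=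
        comm_KH (DQ_le_KQ hzH (pcX_mem_DQ hx (TT_mem_DQ hx hzH ha hb n)))
          (pc_mem_HQ hu hv)
      rw [mul_inv_rev, hco.inv_left.inv_right.eq]

lemma TT_mul_right {a b₁ b₂ : Q} (ha : a ∈ HQ C) (h₁ : b₁ ∈ HQ C) (h₂ : b₂ ∈ HQ C)
    (n : ℕ) : TT X a (b₁*b₂) n = TT X a b₁ n * TT X a b₂ n := by
  induction n with
  | zero => exact (one_mul 1).symm
  | succ n ih =>
      obtain ⟨d, hd, he⟩ := quad hx hzH h₁ h₂ n
      show pc (TT X a (b₁*b₂) n) X * pc (itc X a (n+1)) (itc X (b₁*b₂) n) = _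
      have hu : itc X a (n+1) ∈ HQ C := itc_mem_HQ hx ha (n+1)
      have hv₁ : itc X b₁ n ∈ HQ C := itc_mem_HQ hx h₁ n
      have hv₂ : itc X b₂ n ∈ HQ C := itc_mem_HQ hx h₂ n
      rw [ih, he, pc_snd_mulD hx hzH hu (mul_mem hv₁ hv₂) hd,
        pc_snd_mulHH hx hzH hu hv₁ hv₂,
        pcX_mul_H_D hx hzH (DQ_le_HQ' (DQ_le_KQ hzH) (TT_mem_DQ hx hzH ha h₁ n))
          (TT_mem_DQ hx hzH ha h₂ n)]
      show _ = pc (TT X a b₁ n) X * pc (itc X a (n+1)) (itc X b₁ n) *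
        (pc (TT X a b₂ n) X * pc (itc X a (n+1)) (itc X b₂ n))
      have hcm : pc (TT X a b₂ n) X * pc (itc X a (n+1)) (itc X b₁ n)
          = pc (itc X a (n+1)) (itc X b₁ n) * pc (TT X a b₂ n) X :=
        comm_KH (DQ_le_KQ hzH (pcX_mem_DQ hx (TT_mem_DQ hx hzH ha h₂ n)))
          (pc_mem_HQ hu hv₁)
      set A := pc (TT X a b₁ n) X
      set B := pc (TT X a b₂ n) X
      set Z₁ := pc (itc X a (n+1)) (itc X b₁ n)
      set Z₂ := pc (itc X a (n+1)) (itc X b₂ n)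
      calc A * B * (Z₁ * Z₂) = A * (B * Z₁) * Z₂ := by group
        _ = A * (Z₁ * B) * Z₂ := by rw [hcm]
        _ = A * Z₁ * (B * Z₂) := by group

lemma TT_inv_right {a b : Q} (ha : a ∈ HQ C) (hb : b ∈ HQ C) (n : ℕ) :
    TT X a b⁻¹ n = (TT X a b n)⁻¹ := by
  induction n with
  | zero => exact inv_one.symm
  | succ n ih =>
      obtain ⟨d, hd, he⟩ := itc_inv hx hzH hb n
      show pc (TT X a b⁻¹ n) X * pc (itc X a (n+1)) (itc X b⁻¹ n) = _
      have hu : itc X a (n+1) ∈ HQ C := itc_mem_HQ hx ha (n+1)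
      have hv : itc X b n ∈ HQ C := itc_mem_HQ hx hb n
      rw [ih, he, pc_snd_mulD hx hzH hu (inv_mem hv) hd, pc_snd_inv hx hzH hu hv,
        pcX_inv_D hx hzH (TT_mem_DQ hx hzH ha hb n)]
      show _ = (pc (TT X a b n) X * pc (itc X a (n+1)) (itc X b n))⁻¹
      have hco : Commute (pc (TT X a b n) X) (pc (itc X a (n+1)) (itc X b n)) :=
        comm_KH (DQ_le_KQ hzH (pcX_mem_DQ hx (TT_mem_DQ hx hzH ha hb n)))
          (pc_mem_HQ hu hv)
      rw [mul_inv_rev, hco.inv_left.inv_right.eq]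

lemma TT_C_eq (i j : ℕ) (hi : 1 ≤ i) (hj : 1 ≤ j) (n : ℕ) :
    TT X (C i) (C j) n =
      ((List.range n).map (fun t => itc X (pc (C (i+t+1)) (C (j+t))) (n-1-t))).prod := by
  induction n with
  | zero => rfl
  | succ n ih =>
      show pc (TT X (C i) (C j) n) X * pc (itc X (C i) (n+1)) (itc X (C j) n) = _
      rw [List.range_succ, List.map_append, List.prod_append]
      have hlast : ((List.map (fun t => itc X (pc (C (i+t+1)) (C (j+t))) (n+1-1-t)) [n]).prod)
          = pc (C (i+n+1)) (C (j+n)) := by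
        simp only [List.map_cons, List.map_nil, List.prod_cons, List.prod_nil, mul_one]
        have h0 : n + 1 - 1 - n = 0 := by omega
        rw [h0]
        rfl
      rw [hlast, itc_C hx i hi (n+1), itc_C hx j hj n, ih]
      congr 1
      rw [pcX_list_prod hx hzH ?mem]
      case mem =>
        rintro u hu
        rw [List.mem_map] at hu
        obtain ⟨t, ht, rfl⟩ := hu
        exact itc_mem_DQ hx
          (pc_mem_DQ (C_mem_HQ _ (by omega)) (C_mem_HQ _ (by omega))) _
      rw [List.map_map]
      refine congrArg List.prod ?_
      apply List.map_congr_left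
      intro t ht
      rw [List.mem_range] at ht
      show pc (itc X (pc (C (i+t+1)) (C (j+t))) (n-1-t)) X = _
      have h1 : n + 1 - 1 - t = (n - 1 - t) + 1 := by omega
      rw [h1]
      rfl

end TLayer

/-- abstract `Γ_{(k)}` -/
def GQ {Q : Type*} [Group Q] (C : ℕ → Q) (q : ℕ) : Subgroup Q :=
  Subgroup.closure ({g : Q | ∃ j, q ≤ j ∧ g = C j} ∪
    {g : Q | ∃ m n, 1 ≤ n ∧ n < m ∧ q ≤ m + n ∧ g = pc (C m) (C n)})

section MainAbs
variable {Q : Type*} [Group Q] {X : Q} {C : ℕ → Q}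
variable (hx : ∀ i, 1 ≤ i → C (i+1) = pc (C i) X)
variable (hzH : ∀ m n : ℕ, 1 ≤ m → 1 ≤ n →
    ∀ h ∈ HQ C, pc (C m) (C n) * h = h * pc (C m) (C n))

lemma GQ_le_HQ {q : ℕ} (hq : 1 ≤ q) : GQ C q ≤ HQ C := by
  rw [GQ, Subgroup.closure_le]
  rintro g (⟨j, hj, rfl⟩ | ⟨m, n, hn, hnm, hmn, rfl⟩)
  · exact C_mem_HQ j (le_trans hq hj)
  · exact pc_mem_HQ (C_mem_HQ m (by omega)) (C_mem_HQ n hn)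

include hx hzH in
lemma main2 {q r : ℕ} (hq : 1 ≤ q)
    (hw : ∀ i j, q ≤ i → q ≤ j →
      ((List.range r).map (fun t => itc X (pc (C (i+t+1)) (C (j+t))) (r-1-t))).prod = 1) :
    ∀ a ∈ GQ C q, ∀ b ∈ GQ C q, TT X a b r = 1 := by
  intro a ha
  induction ha using Subgroup.closure_induction with
  | mem g hg =>
      rcases hg with ⟨i, hi, rfl⟩ | ⟨m, n, hn, hnm, hmn, rfl⟩
      · intro b hb
        induction hb using Subgroup.closure_induction with
        | mem g' hg' =>
            rcases hg' with ⟨j, hj, rfl⟩ | ⟨m, n, hn, hnm, hmn, rfl⟩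
            · rw [TT_C_eq hx hzH i j (le_trans hq hi) (le_trans hq hj) r]
              exact hw i j hi hj
            · exact TT_right_D hx hzH (C_mem_HQ i (le_trans hq hi))
                (pc_mem_DQ (C_mem_HQ m (by omega)) (C_mem_HQ n hn)) r
        | one => exact TT_right_D hx hzH (C_mem_HQ i (le_trans hq hi)) (one_mem _) r
        | mul b₁ b₂ h₁ h₂ ih₁ ih₂ =>
            rw [TT_mul_right hx hzH (C_mem_HQ i (le_trans hq hi))
              (GQ_le_HQ hq h₁) (GQ_le_HQ hq h₂), ih₁, ih₂, mul_one]
        | inv b h ih =>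
            rw [TT_inv_right hx hzH (C_mem_HQ i (le_trans hq hi))
              (GQ_le_HQ hq h), ih, inv_one]
      · intro b hb
        exact TT_left_D hx hzH
          (pc_mem_DQ (C_mem_HQ m (by omega)) (C_mem_HQ n hn)) (GQ_le_HQ hq hb) r
  | one => intro b hb; exact TT_left_D hx hzH (one_mem _) (GQ_le_HQ hq hb) r
  | mul a₁ a₂ h₁ h₂ ih₁ ih₂ =>
      intro b hb
      rw [TT_mul_left hx hzH (GQ_le_HQ hq h₁) (GQ_le_HQ hq h₂) (GQ_le_HQ hq hb),
        ih₁ b hb, ih₂ b hb, mul_one]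
  | inv a h ih =>
      intro b hb
      rw [TT_inv_left hx hzH (GQ_le_HQ hq h) (GQ_le_HQ hq hb), ih b hb, inv_one]

include hx hzH in
theorem main_abstract {q r : ℕ} (hq : 1 ≤ q)
    (hw : ∀ i j, q ≤ i → q ≤ j →
      ((List.range r).map (fun t => itc X (pc (C (i+t+1)) (C (j+t))) (r-1-t))).prod = 1)
    {a b : Q} (ha : a ∈ GQ C q) (hb : b ∈ GQ C q) :
    itc X (a*b) r = itc X a r * itc X b r := by
  rw [main1 hx hzH (GQ_le_HQ hq ha) (GQ_le_HQ hq hb) r,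
    main2 hx hzH hq hw a ha b hb, mul_one]

end MainAbs

section Inst
variable {G : Type*} [Group G]

lemma map_pc {H' : Type*} [Group H'] (f : G →* H') (a b : G) :
    f (pc a b) = pc (f a) (f b) := by simp [pc]

lemma map_itc {H' : Type*} [Group H'] (f : G →* H') (x a : G) (n : ℕ) :
    f (itc x a n) = itc (f x) (f a) n := by
  induction n with
  | zero => rfl
  | succ n ih => show f (pc _ _) = pc _ _; rw [map_pc, ih]

lemma cc_succ (x y : G) (i : ℕ) (hi : 1 ≤ i) : cc x y (i+1) = pc (cc x y i) x := by
  unfold cc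
  have h : i + 1 - 1 = (i - 1) + 1 := by omega
  rw [h]
  rfl

end Inst

/-- images of the `c_i` in the quotient by `L̃_k` -/
def CQ (p : ℕ) (x y : G) (k : ℕ) : ℕ → G ⧸ LsubT p x y k :=
  fun i => QuotientGroup.mk (cc x y i)

theorem lemma_tilde_Lk_i (p : ℕ) (hp : p.Prime) (hodd : Odd p) (x y : G)
    (hca : ∀ z ∈ ZsubP x y, ∀ h ∈ Hsub x y, z * h = h * z)
    (hHp : ∀ h ∈ Hsub x y, h ^ p = 1)
    (k : ℕ) (hk : 1 ≤ k) (h₁ h₂ : G)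
    (hh₁ : h₁ ∈ GammaK p x y k) (hh₂ : h₂ ∈ GammaK p x y k) :
    (itc x h₁ (p ^ k - p ^ (k - 1)) * itc x h₂ (p ^ k - p ^ (k - 1)))⁻¹ *
        itc x (h₁ * h₂) (p ^ k - p ^ (k - 1)) ∈ LsubT p x y k := by
  haveI hN : (LsubT p x y k).Normal := Subgroup.normalClosure_normal
  let π : G →* G ⧸ LsubT p x y k := QuotientGroup.mk' (LsubT p x y k)
  have hq : 1 ≤ p ^ (k - 1) := Nat.one_le_pow _ _ hp.pos
  -- the recursion for the images of the `c_i`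
  have hxQ : ∀ i, 1 ≤ i → CQ p x y k (i+1) = pc (CQ p x y k i) (π x) := by
    intro i hi
    show π (cc x y (i+1)) = pc (π (cc x y i)) (π x)
    rw [cc_succ x y i hi, map_pc]
  -- `H` in the quotient
  have hHQ : Subgroup.map π (Hsub x y) = HQ (CQ p x y k) := by
    rw [Hsub, HQ, MonoidHom.map_closure]
    congr 1
    ext g
    simp only [Set.mem_image, Set.mem_setOf_eq]
    constructor
    · rintro ⟨h, ⟨i, hi, rfl⟩, rfl⟩; exact ⟨i, hi, rfl⟩
    · rintro ⟨i, hi, rfl⟩; exact ⟨cc x y i, ⟨i, hi, rfl⟩, rfl⟩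
  -- centrality of the `z`'s
  have hzHQ : ∀ m n : ℕ, 1 ≤ m → 1 ≤ n → ∀ h ∈ HQ (CQ p x y k),
      pc (CQ p x y k m) (CQ p x y k n) * h = h * pc (CQ p x y k m) (CQ p x y k n) := by
    intro m n hm hn h hh
    rw [← hHQ] at hh
    obtain ⟨h₀, hh₀, rfl⟩ := Subgroup.mem_map.1 hh
    have hzz : zz x y m n ∈ ZsubP x y := Subgroup.subset_closure ⟨m, n, hm, hn, rfl⟩
    have e1 : pc (CQ p x y k m) (CQ p x y k n) = π (zz x y m n) := (map_pc π _ _).symm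
    rw [e1, ← map_mul, ← map_mul, hca _ hzz h₀ hh₀]
  -- the `w̃` relations in the quotient
  have hwQ : ∀ i j, p ^ (k-1) ≤ i → p ^ (k-1) ≤ j →
      ((List.range (p ^ k - p ^ (k-1))).map
        (fun t => itc (π x) (pc (CQ p x y k (i+t+1)) (CQ p x y k (j+t)))
          (p ^ k - p ^ (k-1) - 1 - t))).prod = 1 := by
    intro i j hi hj
    have hmem : wwT p x y i j k ∈ LsubT p x y k :=
      Subgroup.subset_normalClosure (Or.inl ⟨i, j, hi, hj, rfl⟩)
    have h1 : π (wwT p x y i j k) = 1 := (QuotientGroup.eq_one_iff _).2 hmem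
    rw [wwT, MonoidHom.map_list_prod, List.map_map] at h1
    have hfun : (⇑π ∘ fun t => itc x (zz x y (i + t + 1) (j + t))
          (p ^ k - p ^ (k - 1) - 1 - t))
        = fun t => itc (π x) (pc (CQ p x y k (i+t+1)) (CQ p x y k (j+t)))
          (p ^ k - p ^ (k-1) - 1 - t) := by
      funext t
      show π (itc x (zz x y (i + t + 1) (j + t)) _) = _
      rw [map_itc]
      simp only [zz]
      rw [map_pc]
      rfl
    rw [hfun] at h1
    exact h1
  -- images of `Γ_{(k)}`
  have hGam : Subgroup.map π (GammaK p x y k) ≤ GQ (CQ p x y k) (p ^ (k-1)) := by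
    rw [GammaK, MonoidHom.map_closure]
    refine (Subgroup.closure_le _).2 ?_
    rintro g ⟨g₀, hg₀, rfl⟩
    rcases hg₀ with ⟨j, hj, rfl⟩ | ⟨m, n, hn, hnm, hmn, rfl⟩
    · exact Subgroup.subset_closure (Or.inl ⟨j, hj, rfl⟩)
    · refine Subgroup.subset_closure (Or.inr ⟨m, n, hn, hnm, hmn, ?_⟩)
      simp only [zz]
      rw [map_pc]
      rfl
  have ha : π h₁ ∈ GQ (CQ p x y k) (p ^ (k-1)) := hGam (Subgroup.mem_map_of_mem π hh₁)
  have hb : π h₂ ∈ GQ (CQ p x y k) (p ^ (k-1)) := hGam (Subgroup.mem_map_of_mem π hh₂)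
  have hmain := main_abstract hxQ hzHQ hq hwQ ha hb
  refine (QuotientGroup.eq_one_iff _).1 ?_
  show π ((itc x h₁ (p ^ k - p ^ (k - 1)) * itc x h₂ (p ^ k - p ^ (k - 1)))⁻¹ *
      itc x (h₁ * h₂) (p ^ k - p ^ (k - 1))) = 1
  rw [map_mul, map_inv, map_mul, map_itc, map_itc, map_itc, map_mul, hmain]
  exact inv_mul_cancel _


end Paper
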